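/- Let Σ be a finite alphabet, let L ⊆ Σ* be a nonempty regular language, and let n be the (finite) number of distinct left quotients of L, i.e., n = |{w⁻¹L : w ∈ Σ*}|. Then the number of distinct unions of left quotients of L equals 2^n if and only if for every w ∈ Σ* the set w⁻¹L \ ⋃ {u⁻¹L : u ∈ Σ*, u⁻¹L ≠ w⁻¹L} is nonempty (i.e., every left atomic intersection with one uncomplemented and n−1 complemented left quotients is nonempty). -/

import Mathlib

open Set

/-- The left quotient `w⁻¹L = {x : wx ∈ L}`. -/
def leftQuot {α : Type*} (L : Set (List α)) (w : List α) : Set (List α) :=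
  {x | w ++ x ∈ L}

/-- The right quotient `Lv⁻¹ = {u : uv ∈ L}`. -/
def rightQuot {α : Type*} (L : Set (List α)) (v : List α) : Set (List α) :=
  {u | u ++ v ∈ L}

/-- The left atom of `L` at `v`: the class of `v` under the left congruence of `L`. -/
def leftAtom {α : Type*} (L : Set (List α)) (v : List α) : Set (List α) :=
  {x | ∀ u : List α, u ++ x ∈ L ↔ u ++ v ∈ L}

/-- The right atom of `L` at `w`: the Nerode class of `w`. -/
def rightAtom {α : Type*} (L : Set (List α)) (w : List α) : Set (List α) :=
  {u | ∀ x : List α, u ++ x ∈ L ↔ w ++ x ∈ L}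

/-- `X` is a union of left quotients of `L`. -/
def IsUnionLeftQuot {α : Type*} (L : Set (List α)) (X : Set (List α)) : Prop :=
  ∃ W : Set (List α), X = ⋃ w ∈ W, leftQuot L w

/-- `Y` is a union of right quotients of `L`. -/
def IsUnionRightQuot {α : Type*} (L : Set (List α)) (Y : Set (List α)) : Prop :=
  ∃ W : Set (List α), Y = ⋃ v ∈ W, rightQuot L v

/-- `X` is an intersection of left quotients of `L` (empty intersection is `Σ*`). -/
def IsInterLeftQuot {α : Type*} (L : Set (List α)) (X : Set (List α)) : Prop :=
  ∃ W : Set (List α), X = ⋂ w ∈ W, leftQuot L w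

/-- `Y` is an intersection of right quotients of `L` (empty intersection is `Σ*`). -/
def IsInterRightQuot {α : Type*} (L : Set (List α)) (Y : Set (List α)) : Prop :=
  ∃ W : Set (List α), Y = ⋂ v ∈ W, rightQuot L v

/-- The map `Ψ(X) = ⋃ {Lv⁻¹ : v ∉ X}`. -/
def Psi {α : Type*} (L : Set (List α)) (X : Set (List α)) : Set (List α) :=
  ⋃ v ∈ {v : List α | v ∉ X}, rightQuot L v

/-- The map `Ψ'(Y) = ⋃ {u⁻¹L : u ∉ Y}`. -/
def Psi' {α : Type*} (L : Set (List α)) (Y : Set (List α)) : Set (List α) :=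
  ⋃ u ∈ {u : List α | u ∉ Y}, leftQuot L u

/-- The map `Φ(X) = ⋂ {Lv⁻¹ : v ∈ X}` (empty intersection is `Σ*`). -/
def Phi {α : Type*} (L : Set (List α)) (X : Set (List α)) : Set (List α) :=
  ⋂ v ∈ X, rightQuot L v

/-- The map `Φ'(Y) = ⋂ {u⁻¹L : u ∈ Y}` (empty intersection is `Σ*`). -/
def Phi' {α : Type*} (L : Set (List α)) (Y : Set (List α)) : Set (List α) :=
  ⋂ u ∈ Y, leftQuot L u

/-- the union lattice has maximal complexity `2^n` iff all atomic
intersections with one uncomplemented quotient are nonempty. -/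
theorem union_complexity {α : Type*} [Fintype α] (L : Set (List α))
    (hne : L.Nonempty) (hL : Language.IsRegular L) (n : ℕ)
    (hn : n = {X : Set (List α) | ∃ w : List α, X = leftQuot L w}.ncard) :
    {X : Set (List α) | IsUnionLeftQuot L X}.ncard = 2 ^ n ↔
      ∀ w : List α,
        (leftQuot L w \
          ⋃ u ∈ {u : List α | leftQuot L u ≠ leftQuot L w}, leftQuot L u).Nonempty := by
    classical
  set Q : Set (Set (List α)) := {X | ∃ w : List α, X = leftQuot L w} with hQdef
  -- Q is finite, by regularity
  have hQfin : Q.Finite := by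
    obtain ⟨σ, fσ, M, hM⟩ := hL
    apply (Set.finite_range (fun s : σ => {x | M.evalFrom s x ∈ M.accept})).subset
    rintro X ⟨w, rfl⟩
    refine ⟨M.eval w, ?_⟩
    ext x
    show M.evalFrom (M.eval w) x ∈ M.accept ↔ w ++ x ∈ L
    rw [← hM]
    show M.evalFrom (M.eval w) x ∈ M.accept ↔ (w ++ x) ∈ (M.accepts : Language α)
    rw [DFA.mem_accepts, DFA.eval, DFA.evalFrom_of_append]
  -- unions of quotients are exactly sUnions of subsets of Q
  have hU : {X | IsUnionLeftQuot L X} = Set.sUnion '' {S | S ⊆ Q} := by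
    ext X
    constructor
    · rintro ⟨W, rfl⟩
      refine ⟨leftQuot L '' W, ?_, ?_⟩
      · rintro _ ⟨w, _, rfl⟩; exact ⟨w, rfl⟩
      · rw [Set.sUnion_image]
    · rintro ⟨S, hS, rfl⟩
      refine ⟨{w | leftQuot L w ∈ S}, ?_⟩
      ext x
      simp only [Set.mem_sUnion, Set.mem_iUnion, Set.mem_setOf_eq]
      constructor
      · rintro ⟨q, hq, hx⟩
        obtain ⟨w, rfl⟩ := hS hq
        exact ⟨w, hq, hx⟩
      · rintro ⟨w, hw, hx⟩
        exact ⟨leftQuot L w, hw, hx⟩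
  -- rewriting the big union on the RHS
  have hbig : ∀ w : List α,
      (⋃ u ∈ {u : List α | leftQuot L u ≠ leftQuot L w}, leftQuot L u)
        = ⋃₀ (Q \ {leftQuot L w}) := by
    intro w
    ext x
    simp only [Set.mem_iUnion, Set.mem_sUnion, Set.mem_diff, Set.mem_singleton_iff,
      Set.mem_setOf_eq, hQdef]
    constructor
    · rintro ⟨u, hu, hx⟩; exact ⟨leftQuot L u, ⟨⟨u, rfl⟩, hu⟩, hx⟩
    · rintro ⟨q, ⟨⟨u, rfl⟩, hq⟩, hx⟩; exact ⟨u, hq, hx⟩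
  -- key combinatorial equivalence
  have key : Set.InjOn Set.sUnion {S | S ⊆ Q} ↔
      ∀ q ∈ Q, (q \ ⋃₀ (Q \ {q})).Nonempty := by
    constructor
    · intro hinj q hq
      by_contra h
      rw [Set.not_nonempty_iff_eq_empty, Set.diff_eq_empty] at h
      have h2 : ⋃₀ (Q \ {q}) = ⋃₀ Q := by
        apply subset_antisymm (Set.sUnion_subset_sUnion Set.diff_subset)
        rintro x ⟨q', hq', hx⟩
        by_cases hqq : q' = q
        · exact h (hqq ▸ hx)
        · exact ⟨q', ⟨hq', hqq⟩, hx⟩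
      have heq : Q \ {q} = Q :=
        hinj (Set.diff_subset : Q \ {q} ⊆ Q) (subset_refl Q) h2
      have : q ∈ Q \ {q} := by rw [heq]; exact hq
      exact this.2 rfl
    · intro hat
      have mono : ∀ S T : Set (Set (List α)), S ⊆ Q → T ⊆ Q → ⋃₀ S = ⋃₀ T → S ⊆ T := by
        intro S T hS hT hST q hqS
        obtain ⟨x, hxq, hxn⟩ := hat q (hS hqS)
        have hx : x ∈ ⋃₀ T := hST ▸ ⟨q, hqS, hxq⟩
        obtain ⟨q', hq'T, hxq'⟩ := hx
        by_cases h : q' = q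
        · exact h ▸ hq'T
        · exact absurd ⟨q', ⟨hT hq'T, h⟩, hxq'⟩ hxn
      intro S hS T hT hST
      exact subset_antisymm (mono S T hS hT hST) (mono T S hT hS hST.symm)
  -- cardinality of the powerset of Q
  have hpow : {S : Set (Set (List α)) | S ⊆ Q}.ncard = 2 ^ n := by
    haveI := hQfin.fintype
    have e : {S : Set (Set (List α)) | S ⊆ Q} ≃ Set ↥Q :=
      { toFun := fun S => {q : ↥Q | (q : Set (List α)) ∈ (S : Set (Set (List α)))}
        invFun := fun T => ⟨Subtype.val '' T, by rintro x ⟨q, _, rfl⟩; exact q.2⟩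
        left_inv := fun S => by
          apply Subtype.ext
          ext x
          simp only [Set.mem_image, Set.mem_setOf_eq]
          constructor
          · rintro ⟨q, hq, rfl⟩; exact hq
          · intro hx; exact ⟨⟨x, S.2 hx⟩, hx, rfl⟩
        right_inv := fun T => by
          ext q
          simp only [Set.mem_image, Set.mem_setOf_eq]
          constructor
          · rintro ⟨q', hq', h⟩; rwa [← Subtype.ext h]
          · intro h; exact ⟨q, h, rfl⟩ }
    rw [← Nat.card_coe_set_eq, Nat.card_congr e, Nat.card_eq_fintype_card,
      Fintype.card_set, hn, ← Nat.card_coe_set_eq, Nat.card_eq_fintype_card]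
  -- assemble
  have hPfin : {S : Set (Set (List α)) | S ⊆ Q}.Finite := hQfin.finite_subsets
  constructor
  · intro hcard w
    rw [hbig w]
    have hinj : Set.InjOn Set.sUnion {S | S ⊆ Q} := by
      apply Set.injOn_of_ncard_image_eq _ hPfin
      rw [← hU, hcard, hpow]
    exact key.mp hinj (leftQuot L w) ⟨w, rfl⟩
  · intro hat
    have hinj : Set.InjOn Set.sUnion {S | S ⊆ Q} := by
      apply key.mpr
      rintro q ⟨w, rfl⟩
      have := hat w
      rwa [hbig w] at this
    rw [hU, Set.ncard_image_of_injOn hinj, hpow]
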